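/- Assume X takes values in (0,∞), its tail quantile function U₁ satisfies U₁(t)/t^{γ₁} → d ∈ (0,∞) with γ₁ > 0, and the dependence functions c_t(x,y) = t^{1/η} P(X > U₁(t/x), Y > U₂(t/y)) converge to a continuous limit c(x,1) in the first argument uniformly in the senses: sup_{x≤1}|c_t(x,1)−c(x,1)|x^{−β₁} → 0 for some β₁ > γ₁, and sup_{1<x<t}|c_t(x,1)−c(x,1)|x^{−β₂} → 0 for some 0 < β₂ < γ₁. If η ∈ (1/2,1], −1/η + 1 + γ₁ > 0, and ∫₀^∞ c(x^{−1/γ₁}, 1) dx < ∞, then lim_{t→∞} θ_{1/t} / ( t^{−1/η + 1} U₁(t) ) = ∫₀^∞ c(x^{−1/γ₁}, 1) dx, where θ_{1/t} = E[X | Y > U₂(t)]. -/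

import Mathlib

set_option maxHeartbeats 1000000
open Real Filter MeasureTheory

theorem aux_ratio (U₁ : ℝ → ℝ) (γ₁ d : ℝ) (hd : 0 < d)
    (hU₁pos : ∀ t : ℝ, 0 < t → 0 < U₁ t)
    (hA1 : Tendsto (fun t => U₁ t / t ^ γ₁) atTop (nhds d))
    {k u : ℝ} (hk : 0 < k) (hu : 0 < u) :
    Tendsto (fun t => U₁ (t * k) / (U₁ t * u)) atTop (nhds (k ^ γ₁ / u)) := by
  have h1 : Tendsto (fun t => U₁ (t * k) / (t * k) ^ γ₁) atTop (nhds d) :=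
    hA1.comp (tendsto_id.atTop_mul_const hk)
  have h2 := (h1.div hA1 hd.ne').mul_const (k ^ γ₁ / u)
  rw [div_self hd.ne', one_mul] at h2
  refine h2.congr' ?_
  filter_upwards [eventually_gt_atTop (0:ℝ)] with t ht
  have htγ : (0:ℝ) < t ^ γ₁ := rpow_pos_of_pos ht _
  have hkγ : (0:ℝ) < k ^ γ₁ := rpow_pos_of_pos hk _
  have hU : 0 < U₁ t := hU₁pos t ht
  simp only [Pi.div_apply]
  rw [Real.mul_rpow ht.le hk.le]
  field_simp

/-- Proposition 1: limit of the marginal expected shortfall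
`θ_{1/t} = E[X | Y > U₂(t)]` under asymptotic independence:
`θ_{1/t} / (t^{-1/η+1} U₁(t)) → ∫₀^∞ c(x^{-1/γ₁}, 1) dx`. -/
theorem stmt_10 {Ω : Type*} [MeasurableSpace Ω] (μ : Measure Ω) [IsProbabilityMeasure μ]
    (X Y : Ω → ℝ) (hXm : Measurable X) (hYm : Measurable Y)
    (hXpos : ∀ᵐ ω ∂μ, 0 < X ω) (hXint : Integrable X μ)
    (η γ₁ d β₁ β₂ : ℝ) (hη : 1 / 2 < η ∧ η ≤ 1) (hγ₁ : 0 < γ₁) (hd : 0 < d)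
    (hβ₁ : β₁ > γ₁) (hβ₂ : 0 < β₂ ∧ β₂ < γ₁)
    (hexp : -(1 / η) + 1 + γ₁ > 0)
    (U₁ U₂ : ℝ → ℝ) (hU₁pos : ∀ t : ℝ, 0 < t → 0 < U₁ t)
    (hA1 : Tendsto (fun t => U₁ t / t ^ γ₁) atTop (nhds d))
    (hU₂ : ∀ t : ℝ, 1 < t → (μ {ω | Y ω > U₂ t}).toReal = 1 / t)
    (ct : ℝ → ℝ → ℝ → ℝ)
    (hct : ∀ t x y : ℝ, ct t x y
      = t ^ (1 / η) * (μ {ω | X ω > U₁ (t / x) ∧ Y ω > U₂ (t / y)}).toReal)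
    (c : ℝ → ℝ → ℝ)
    (hccont : ContinuousOn (fun x => c x 1) (Set.Ioi (0 : ℝ)))
    (hclim : ∀ x y : ℝ, 0 < x → 0 < y → Tendsto (fun t => ct t x y) atTop (nhds (c x y)))
    (hA2 : ∀ ε : ℝ, 0 < ε → ∃ T : ℝ, ∀ t ≥ T, ∀ x : ℝ, 0 < x → x ≤ 1 →
      |ct t x 1 - c x 1| * x ^ (-β₁) ≤ ε)
    (hA3 : ∀ ε : ℝ, 0 < ε → ∃ T : ℝ, ∀ t ≥ T, ∀ x : ℝ, 1 < x → x < t →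
      |ct t x 1 - c x 1| * x ^ (-β₂) ≤ ε)
    (hcint : IntegrableOn (fun x => c (x ^ (-(1 / γ₁))) 1) (Set.Ioi (0 : ℝ))) :
    Tendsto (fun t =>
        ((∫ ω in {ω | Y ω > U₂ t}, X ω ∂μ) / (μ {ω | Y ω > U₂ t}).toReal)
          / (t ^ (-(1 / η) + 1) * U₁ t))
      atTop (nhds (∫ x in Set.Ioi (0 : ℝ), c (x ^ (-(1 / γ₁))) 1)) := by
  obtain ⟨hη1, hη2⟩ := hη
  have hηpos : (0:ℝ) < η := by linarith
  have hγ' : (0:ℝ) < 1 / γ₁ := by positivity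
  -- basic notation
  set g : ℝ → ℝ → ℝ := fun t u => t ^ (1/η) * (μ {ω | X ω > U₁ t * u ∧ Y ω > U₂ t}).toReal
    with hg_def
  set L : ℝ → ℝ := fun u => c (u ^ (-(1/γ₁))) 1 with hL_def
  have hsetm : ∀ (s b : ℝ), MeasurableSet {ω | X ω > s ∧ Y ω > b} := by
    intro s b
    exact (measurableSet_lt measurable_const hXm).inter (measurableSet_lt measurable_const hYm)
  have hAm : ∀ b : ℝ, MeasurableSet {ω | Y ω > b} := fun b =>
    measurableSet_lt measurable_const hYm
  have toReal_mono' : ∀ s₁ s₂ : Set Ω, s₁ ⊆ s₂ → (μ s₁).toReal ≤ (μ s₂).toReal :=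
    fun s₁ s₂ h => ENNReal.toReal_mono (measure_ne_top μ _) (measure_mono h)
  have hg_meas : ∀ t : ℝ, 0 < t → Measurable (g t) := by
    intro t ht
    have hU : 0 < U₁ t := hU₁pos t ht
    apply Measurable.const_mul
    apply Measurable.ennreal_toReal
    apply Antitone.measurable
    intro u v huv
    apply measure_mono
    intro ω hω
    exact ⟨lt_of_le_of_lt (mul_le_mul_of_nonneg_left huv hU.le) hω.1, hω.2⟩
  have hg_nonneg : ∀ t : ℝ, 0 < t → ∀ u : ℝ, 0 ≤ g t u := by
    intro t ht u
    exact mul_nonneg (rpow_nonneg ht.le _) ENNReal.toReal_nonneg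
  have hc_nonneg : ∀ x : ℝ, 0 < x → 0 ≤ c x 1 := by
    intro x hx
    refine ge_of_tendsto (hclim x 1 hx one_pos) ?_
    filter_upwards [eventually_ge_atTop (0:ℝ)] with t ht
    rw [hct]
    positivity
  -- pointwise limit
  have hpt : ∀ u : ℝ, 0 < u → Tendsto (fun t => g t u) atTop (nhds (L u)) := by
    intro u hu
    refine Metric.tendsto_nhds.mpr ?_
    intro ε hε
    have hupos : (0:ℝ) < u ^ (-(1/γ₁)) := rpow_pos_of_pos hu _
    have hcc : ContinuousAt (fun ρ : ℝ => c ((ρ*u) ^ (-(1/γ₁))) 1) 1 := by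
      have houter : ContinuousAt (fun x => c x 1) ((1*u) ^ (-(1/γ₁))) := by
        rw [one_mul]
        exact hccont.continuousAt (isOpen_Ioi.mem_nhds hupos)
      have hinner : ContinuousAt (fun ρ : ℝ => (ρ*u) ^ (-(1/γ₁))) 1 :=
        ContinuousAt.rpow_const ((continuous_id.mul continuous_const).continuousAt)
          (Or.inl (by simp [hu.ne']))
      have hcomp := ContinuousAt.comp (g := fun x => c x 1)
        (f := fun ρ : ℝ => (ρ*u) ^ (-(1/γ₁))) (x := (1:ℝ)) houter hinner
      exact hcomp
    have hLval : c ((1*u) ^ (-(1/γ₁))) 1 = L u := by rw [one_mul]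
    obtain ⟨δ₀, hδ₀pos, hδ₀⟩ := Metric.continuousAt_iff.mp hcc (ε/2) (by linarith)
    set δ : ℝ := min (δ₀/2) (1/2) with hδ_def
    have hδpos : 0 < δ := lt_min (by linarith) (by norm_num)
    have hδlt : δ < 1 := lt_of_le_of_lt (min_le_right _ _) (by norm_num)
    have hδδ₀ : δ < δ₀ := lt_of_le_of_lt (min_le_left _ _) (by linarith)
    have hplus : dist (c (((1+δ)*u) ^ (-(1/γ₁))) 1) (L u) < ε/2 := by
      have := hδ₀ (x := 1+δ) (by rw [Real.dist_eq, add_sub_cancel_left, abs_of_nonneg hδpos.le]; exact hδδ₀)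
      rwa [hLval] at this
    have hminus : dist (c (((1-δ)*u) ^ (-(1/γ₁))) 1) (L u) < ε/2 := by
      have := hδ₀ (x := 1-δ) (by rw [Real.dist_eq]; rw [show (1-δ)-1 = -δ by ring, abs_neg, abs_of_nonneg hδpos.le]; exact hδδ₀)
      rwa [hLval] at this
    have h1u : (0:ℝ) < (1+δ)*u := by nlinarith
    have h2u : (0:ℝ) < (1-δ)*u := by nlinarith
    set xp : ℝ := ((1+δ)*u) ^ (-(1/γ₁)) with hxp_def
    set xm : ℝ := ((1-δ)*u) ^ (-(1/γ₁)) with hxm_def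
    have hxp : 0 < xp := rpow_pos_of_pos h1u _
    have hxm : 0 < xm := rpow_pos_of_pos h2u _
    set kp : ℝ := ((1+δ)*u) ^ (1/γ₁) with hkp_def
    set km : ℝ := ((1-δ)*u) ^ (1/γ₁) with hkm_def
    have hkp : 0 < kp := rpow_pos_of_pos h1u _
    have hkm : 0 < km := rpow_pos_of_pos h2u _
    have hkpγ : kp ^ γ₁ = (1+δ)*u := by
      rw [hkp_def, ← Real.rpow_mul h1u.le, one_div, inv_mul_cancel₀ hγ₁.ne', Real.rpow_one]
    have hkmγ : km ^ γ₁ = (1-δ)*u := by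
      rw [hkm_def, ← Real.rpow_mul h2u.le, one_div, inv_mul_cancel₀ hγ₁.ne', Real.rpow_one]
    have hrp := aux_ratio U₁ γ₁ d hd hU₁pos hA1 hkp hu
    have hrm := aux_ratio U₁ γ₁ d hd hU₁pos hA1 hkm hu
    rw [hkpγ, mul_div_assoc, div_self hu.ne', mul_one] at hrp
    rw [hkmγ, mul_div_assoc, div_self hu.ne', mul_one] at hrm
    have hev1 : ∀ᶠ t in atTop, 1 < U₁ (t*kp) / (U₁ t * u) :=
      hrp.eventually (eventually_gt_nhds (by linarith))
    have hev2 : ∀ᶠ t in atTop, U₁ (t*km) / (U₁ t * u) < 1 :=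
      hrm.eventually (eventually_lt_nhds (by linarith))
    have hev3 : ∀ᶠ t in atTop, L u - ε < ct t xp 1 := by
      refine (hclim xp 1 hxp one_pos).eventually (eventually_gt_nhds ?_)
      have := abs_lt.mp (by rw [← Real.dist_eq]; exact hplus)
      linarith [this.1]
    have hev4 : ∀ᶠ t in atTop, ct t xm 1 < L u + ε := by
      refine (hclim xm 1 hxm one_pos).eventually (eventually_lt_nhds ?_)
      have := abs_lt.mp (by rw [← Real.dist_eq]; exact hminus)
      linarith [this.2]
    filter_upwards [hev1, hev2, hev3, hev4, eventually_gt_atTop (0:ℝ)]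
      with t h1 h2 h3 h4 ht0
    have hU : 0 < U₁ t := hU₁pos t ht0
    have hUu : 0 < U₁ t * u := mul_pos hU hu
    have hup : U₁ t * u < U₁ (t * kp) := (one_lt_div hUu).mp h1
    have hum : U₁ (t * km) < U₁ t * u := (div_lt_one hUu).mp h2
    have hxpk : t / xp = t * kp := by
      rw [hxp_def, Real.rpow_neg h1u.le, div_inv_eq_mul, ← hkp_def]
    have hxmk : t / xm = t * km := by
      rw [hxm_def, Real.rpow_neg h2u.le, div_inv_eq_mul, ← hkm_def]
    have hgp : ct t xp 1 ≤ g t u := by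
      rw [hct, div_one, hxpk]
      refine mul_le_mul_of_nonneg_left (toReal_mono' _ _ ?_) (rpow_nonneg ht0.le _)
      intro ω hω
      exact ⟨lt_trans hup hω.1, hω.2⟩
    have hgm : g t u ≤ ct t xm 1 := by
      rw [hct, div_one, hxmk]
      refine mul_le_mul_of_nonneg_left (toReal_mono' _ _ ?_) (rpow_nonneg ht0.le _)
      intro ω hω
      exact ⟨lt_trans hum hω.1, hω.2⟩
    rw [Real.dist_eq, abs_sub_lt_iff]
    exact ⟨by linarith, by linarith⟩
  -- constants from hA1
  obtain ⟨S₀, hS₀⟩ := (Metric.tendsto_atTop.mp hA1) (d/4) (by linarith)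
  set S : ℝ := max S₀ 1 with hS_def
  have hS1 : (1:ℝ) ≤ S := le_max_right _ _
  have hSpos : (0:ℝ) < S := lt_of_lt_of_le one_pos hS1
  have hSbound : ∀ s : ℝ, S ≤ s → 3/4*d*s^γ₁ ≤ U₁ s ∧ U₁ s ≤ 5/4*d*s^γ₁ := by
    intro s hs
    have hs0 : (0:ℝ) < s := lt_of_lt_of_le hSpos hs
    have hsγ : (0:ℝ) < s ^ γ₁ := rpow_pos_of_pos hs0 _
    have := hS₀ s (le_trans (le_max_left _ _) hs)
    rw [Real.dist_eq, abs_sub_lt_iff] at this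
    have hlow : 3/4*d < U₁ s / s^γ₁ := by linarith [this.2]
    have hhigh : U₁ s / s^γ₁ < 5/4*d := by linarith [this.1]
    exact ⟨le_of_lt ((lt_div_iff₀ hsγ).mp hlow), le_of_lt ((div_lt_iff₀ hsγ).mp hhigh)⟩
  set aT : ℝ → ℝ := fun t => 2 * (S/t) ^ γ₁ with haT_def
  have haT_pos : ∀ t : ℝ, 0 < t → 0 < aT t := by
    intro t ht; exact mul_pos two_pos (rpow_pos_of_pos (div_pos hSpos ht) _)
  have haT_to : Tendsto aT atTop (nhds 0) := by
    have h0 : Tendsto (fun t : ℝ => 2 * S ^ γ₁ * t ^ (-γ₁)) atTop (nhds (2 * S ^ γ₁ * 0)) :=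
      (tendsto_rpow_neg_atTop hγ₁).const_mul _
    rw [mul_zero] at h0
    refine h0.congr' ?_
    filter_upwards [eventually_gt_atTop (0:ℝ)] with t ht
    show 2 * S ^ γ₁ * t ^ (-γ₁) = 2 * (S / t) ^ γ₁
    rw [Real.div_rpow hSpos.le ht.le, Real.rpow_neg ht.le]
    ring
  -- dominating function
  set G : ℝ → ℝ := fun u => c ((u/2) ^ (-(1/γ₁))) 1
      + Set.indicator (Set.Ici 2) (fun v => (v/2) ^ (-(β₁/γ₁))) u
      + Set.indicator (Set.Ioo 0 2) (fun v => (v/2) ^ (-(β₂/γ₁))) u with hG_def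
  have hG_nonneg : ∀ u : ℝ, 0 < u → 0 ≤ G u := by
    intro u hu
    have h1 : (0:ℝ) < (u/2) ^ (-(1/γ₁)) := rpow_pos_of_pos (by positivity) _
    have := hc_nonneg _ h1
    have i1 : 0 ≤ Set.indicator (Set.Ici 2) (fun v : ℝ => (v/2) ^ (-(β₁/γ₁))) u :=
      Set.indicator_nonneg
        (fun v hv => rpow_nonneg (by have := Set.mem_Ici.mp hv; linarith) _) u
    have i2 : 0 ≤ Set.indicator (Set.Ioo 0 2) (fun v : ℝ => (v/2) ^ (-(β₂/γ₁))) u :=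
      Set.indicator_nonneg (fun v hv => rpow_nonneg (by have := hv.1; linarith) _) u
    simp only [hG_def]; linarith
  have hG_int : IntegrableOn G (Set.Ioi (0:ℝ)) := by
    have ht1 : IntegrableOn (fun u : ℝ => c ((u/2) ^ (-(1/γ₁))) 1) (Set.Ioi 0) := by
      have h0 := (integrableOn_Ioi_comp_mul_left_iff
        (fun v : ℝ => c (v ^ (-(1/γ₁))) 1) 0 (show (0:ℝ) < 1/2 by norm_num)).mpr
        (by rw [mul_zero]; exact hcint)
      refine h0.congr_fun ?_ measurableSet_Ioi
      intro u _
      show c (((1/2:ℝ) * u) ^ (-(1/γ₁))) 1 = c ((u/2) ^ (-(1/γ₁))) 1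
      rw [show (1/2:ℝ) * u = u/2 by ring]
    have ht2 : Integrable (Set.indicator (Set.Ici 2) (fun v : ℝ => (v/2) ^ (-(β₁/γ₁))))
        (volume.restrict (Set.Ioi (0:ℝ))) := by
      have hinter : Set.Ici (2:ℝ) ∩ Set.Ioi 0 = Set.Ici 2 :=
        Set.inter_eq_left.mpr (fun v hv => Set.mem_Ioi.mpr (lt_of_lt_of_le two_pos (Set.mem_Ici.mp hv)))
      rw [integrable_indicator_iff measurableSet_Ici, IntegrableOn,
        Measure.restrict_restrict measurableSet_Ici, hinter,
        ← IntegrableOn, integrableOn_Ici_iff_integrableOn_Ioi]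
      have hq : -(β₁/γ₁) < -1 := by
        rw [neg_lt_neg_iff]
        exact (one_lt_div hγ₁).mpr hβ₁
      have base := (integrableOn_Ioi_rpow_of_lt hq two_pos).mul_const
        (((2:ℝ)⁻¹) ^ (-(β₁/γ₁)))
      refine MeasureTheory.IntegrableOn.congr_fun base ?_ measurableSet_Ioi
      intro v hv
      show v ^ (-(β₁/γ₁)) * ((2:ℝ)⁻¹) ^ (-(β₁/γ₁)) = (v/2) ^ (-(β₁/γ₁))
      rw [show (v/2:ℝ) = v * 2⁻¹ from div_eq_mul_inv v 2,
        Real.mul_rpow (by linarith [Set.mem_Ioi.mp hv]) (by norm_num)]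
    have ht3 : Integrable (Set.indicator (Set.Ioo 0 2) (fun v : ℝ => (v/2) ^ (-(β₂/γ₁))))
        (volume.restrict (Set.Ioi (0:ℝ))) := by
      have hinter : Set.Ioo (0:ℝ) 2 ∩ Set.Ioi 0 = Set.Ioo 0 2 :=
        Set.inter_eq_left.mpr (fun v hv => hv.1)
      rw [integrable_indicator_iff measurableSet_Ioo, IntegrableOn,
        Measure.restrict_restrict measurableSet_Ioo, hinter, ← IntegrableOn]
      have hq : (-1:ℝ) < -(β₂/γ₁) := by
        rw [neg_lt_neg_iff]
        exact (div_lt_one hγ₁).mpr hβ₂.2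
      have base0 : IntegrableOn (fun v : ℝ => v ^ (-(β₂/γ₁))) (Set.Ioc 0 2) :=
        (intervalIntegrable_iff_integrableOn_Ioc_of_le (by norm_num)).mp
          (intervalIntegral.intervalIntegrable_rpow' hq)
      have base := (base0.mono_set Set.Ioo_subset_Ioc_self).mul_const
        (((2:ℝ)⁻¹) ^ (-(β₂/γ₁)))
      refine MeasureTheory.IntegrableOn.congr_fun base ?_ measurableSet_Ioo
      intro v hv
      show v ^ (-(β₂/γ₁)) * ((2:ℝ)⁻¹) ^ (-(β₂/γ₁)) = (v/2) ^ (-(β₂/γ₁))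
      rw [show (v/2:ℝ) = v * 2⁻¹ from div_eq_mul_inv v 2,
        Real.mul_rpow (le_of_lt hv.1) (by norm_num)]
    rw [hG_def]
    exact (ht1.add ht2).add ht3
  -- master bound
  obtain ⟨T₂, hT₂⟩ := hA2 1 one_pos
  obtain ⟨T₃, hT₃⟩ := hA3 1 one_pos
  set T₀ : ℝ := max S (max T₂ T₃) with hT₀_def
  have hT₀S : S ≤ T₀ := le_max_left _ _
  have key : ∀ t : ℝ, T₀ ≤ t → ∀ u : ℝ, 0 < u → aT t < u → g t u ≤ G u := by
    intro t hT u hu hau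
    have htS : S ≤ t := le_trans hT₀S hT
    have ht0 : (0:ℝ) < t := lt_of_lt_of_le hSpos htS
    have hu2 : (0:ℝ) < u/2 := by linarith
    set k : ℝ := (u/2) ^ (1/γ₁) with hk_def
    have hk : 0 < k := rpow_pos_of_pos hu2 _
    set x : ℝ := (u/2) ^ (-(1/γ₁)) with hx_def
    have hx : 0 < x := rpow_pos_of_pos hu2 _
    have hxk : x = k⁻¹ := by rw [hx_def, Real.rpow_neg hu2.le]
    have hdivx : t / x = t * k := by rw [hxk, div_inv_eq_mul]
    have hkγ : k ^ γ₁ = u/2 := by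
      rw [hk_def, ← Real.rpow_mul hu2.le, one_div, inv_mul_cancel₀ hγ₁.ne', Real.rpow_one]
    have hStk0 : S/t < k := by
      have h1 : (S/t) ^ γ₁ < u/2 := by
        have h := hau; simp only [haT_def] at h; linarith
      by_contra hcon
      push_neg at hcon
      have := Real.rpow_le_rpow hk.le hcon hγ₁.le
      rw [hkγ] at this; linarith
    have hStk : S < t * k := by
      have := (div_lt_iff₀ ht0).mp hStk0
      linarith [this]
    have hUb := hSbound (t*k) (le_of_lt hStk)
    have hUa := hSbound t htS
    have htγ : (0:ℝ) < t ^ γ₁ := rpow_pos_of_pos ht0 _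
    have hUtk : U₁ (t*k) ≤ U₁ t * u := by
      have e1 : (t*k) ^ γ₁ = t ^ γ₁ * (u/2) := by rw [Real.mul_rpow ht0.le hk.le, hkγ]
      have h5 := hUb.2
      rw [e1] at h5
      nlinarith [hUa.1, htγ, hd, hu]
    have hgle : g t u ≤ ct t x 1 := by
      rw [hct, div_one]
      refine mul_le_mul_of_nonneg_left (toReal_mono' _ _ ?_) (rpow_nonneg ht0.le _)
      intro ω hω
      exact ⟨lt_of_le_of_lt (hdivx ▸ hUtk) hω.1, hω.2⟩
    have habs : ∀ β : ℝ, |ct t x 1 - c x 1| * x ^ (-β) ≤ 1 → ct t x 1 ≤ c x 1 + x ^ β := by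
      intro β h
      have hxβ : (0:ℝ) < x ^ β := rpow_pos_of_pos hx _
      rw [Real.rpow_neg hx.le, ← div_eq_mul_inv, div_le_one hxβ] at h
      linarith [(abs_le.mp h).2]
    by_cases hcase : 2 ≤ u
    · have hx1 : x ≤ 1 := by
        rw [hx_def]
        exact Real.rpow_le_one_of_one_le_of_nonpos (by linarith) (neg_nonpos.mpr hγ'.le)
      have hctle := habs β₁
        (hT₂ t (le_trans (le_trans (le_max_left _ _) (le_max_right S _)) hT) x hx hx1)
      have hind1 : Set.indicator (Set.Ici 2) (fun v : ℝ => (v/2) ^ (-(β₁/γ₁))) u = x ^ β₁ := by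
        rw [Set.indicator_of_mem (Set.mem_Ici.mpr hcase), hx_def,
          show -(β₁/γ₁) = -(1/γ₁)*β₁ by ring, Real.rpow_mul hu2.le]
      have hind2 : Set.indicator (Set.Ioo 0 2) (fun v : ℝ => (v/2) ^ (-(β₂/γ₁))) u = 0 :=
        Set.indicator_of_notMem (fun hmem => absurd hmem.2 (not_lt.mpr hcase)) _
      have hGval : G u = c x 1 + x ^ β₁ := by
        simp only [hG_def]
        rw [hind1, hind2, add_zero, ← hx_def]
      linarith
    · push_neg at hcase
      have hx1 : 1 < x := by
        rw [hx_def, Real.one_lt_rpow_iff_of_pos hu2]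
        right
        exact ⟨by linarith, by linarith⟩
      have hxt : x < t := by
        rw [hxk]
        have h1 : k⁻¹ < (S/t)⁻¹ := inv_strictAnti₀ (div_pos hSpos ht0) hStk0
        rw [inv_div] at h1
        exact lt_of_lt_of_le h1 (div_le_self ht0.le hS1)
      have hctle := habs β₂
        (hT₃ t (le_trans (le_trans (le_max_right T₂ T₃) (le_max_right S _)) hT) x hx1 hxt)
      have hind1 : Set.indicator (Set.Ici 2) (fun v : ℝ => (v/2) ^ (-(β₁/γ₁))) u = 0 :=
        Set.indicator_of_notMem (fun hmem => absurd (Set.mem_Ici.mp hmem) (not_le.mpr hcase)) _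
      have hind2 : Set.indicator (Set.Ioo 0 2) (fun v : ℝ => (v/2) ^ (-(β₂/γ₁))) u = x ^ β₂ := by
        rw [Set.indicator_of_mem (Set.mem_Ioo.mpr ⟨hu, hcase⟩), hx_def,
          show -(β₂/γ₁) = -(1/γ₁)*β₂ by ring, Real.rpow_mul hu2.le]
      have hGval : G u = c x 1 + x ^ β₂ := by
        simp only [hG_def]
        rw [hind1, hind2, add_zero, ← hx_def]
      linarith
  -- part 1 : DCT
  have h1 : Tendsto (fun t => ∫ u in Set.Ioi (0:ℝ), Set.indicator (Set.Ioi (aT t)) (g t) u)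
      atTop (nhds (∫ u in Set.Ioi (0:ℝ), L u)) := by
    refine tendsto_integral_filter_of_dominated_convergence G ?_ ?_ hG_int ?_
    · filter_upwards [eventually_gt_atTop (0:ℝ)] with t ht
      exact ((hg_meas t ht).indicator measurableSet_Ioi).aestronglyMeasurable
    · filter_upwards [eventually_ge_atTop T₀, eventually_gt_atTop (0:ℝ)] with t hTt ht0
      rw [ae_restrict_iff' measurableSet_Ioi]
      refine Filter.Eventually.of_forall (fun u hu => ?_)
      by_cases hmem : u ∈ Set.Ioi (aT t)
      · rw [Set.indicator_of_mem hmem, Real.norm_eq_abs, abs_of_nonneg (hg_nonneg t ht0 u)]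
        exact key t hTt u hu hmem
      · rw [Set.indicator_of_notMem hmem, norm_zero]
        exact hG_nonneg u hu
    · rw [ae_restrict_iff' measurableSet_Ioi]
      refine Filter.Eventually.of_forall (fun u hu => ?_)
      have hev : ∀ᶠ t in atTop, g t u = Set.indicator (Set.Ioi (aT t)) (g t) u := by
        filter_upwards [haT_to.eventually (eventually_lt_nhds hu)] with t hat
        exact (Set.indicator_of_mem hat _).symm
      exact Tendsto.congr' hev (hpt u hu)
  -- part 2 : small part vanishes
  have h2 : Tendsto (fun t => ∫ u in Set.Ioc (0:ℝ) (aT t), g t u) atTop (nhds 0) := by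
    have hbnd : Tendsto (fun t : ℝ => (2 * S ^ γ₁) * t ^ (-(-(1/η) + 1 + γ₁))) atTop
        (nhds ((2 * S ^ γ₁) * 0)) := (tendsto_rpow_neg_atTop hexp).const_mul _
    rw [mul_zero] at hbnd
    refine squeeze_zero_norm' ?_ hbnd
    filter_upwards [eventually_gt_atTop (1:ℝ)] with t ht
    have ht0 : (0:ℝ) < t := lt_trans one_pos ht
    have htη : (0:ℝ) ≤ t ^ (1/η) := rpow_nonneg ht0.le _
    have hbound1 : ∀ u ∈ Set.Ioc (0:ℝ) (aT t), ‖g t u‖ ≤ t ^ (1/η) * (1/t) := by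
      intro u _
      rw [Real.norm_eq_abs, abs_of_nonneg (hg_nonneg t ht0 u)]
      rw [← hU₂ t ht]
      exact mul_le_mul_of_nonneg_left (toReal_mono' _ _ (fun ω hω => hω.2)) htη
    have hle := norm_setIntegral_le_of_norm_le_const (μ := volume)
      (C := t ^ (1/η) * (1/t)) measure_Ioc_lt_top hbound1
    rw [measureReal_def] at hle
    refine le_trans hle ?_
    have hvol : (volume (Set.Ioc (0:ℝ) (aT t))).toReal = aT t := by
      rw [Real.volume_Ioc, sub_zero, ENNReal.toReal_ofReal (haT_pos t ht0).le]
    rw [hvol]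
    have : t ^ (1/η) * (1/t) * aT t = (2 * S ^ γ₁) * (t ^ (1/η) * t⁻¹ * (t ^ γ₁)⁻¹) := by
      simp only [haT_def]
      rw [Real.div_rpow hSpos.le ht0.le]
      field_simp
    rw [this]
    have hrw : t ^ (-(-(1/η) + 1 + γ₁)) = t ^ (1/η) * t⁻¹ * (t ^ γ₁)⁻¹ := by
      rw [show -(-(1/η) + 1 + γ₁) = 1/η + (-1) + (-γ₁) by ring,
        Real.rpow_add ht0, Real.rpow_add ht0, Real.rpow_neg_one, Real.rpow_neg ht0.le]
    rw [hrw]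
  -- combine parts
  have h3 : Tendsto (fun t => ∫ u in Set.Ioi (0:ℝ), g t u) atTop
      (nhds (∫ u in Set.Ioi (0:ℝ), L u)) := by
    have hsum := h1.add h2
    rw [add_zero] at hsum
    refine hsum.congr' ?_
    filter_upwards [eventually_ge_atTop T₀, eventually_gt_atTop (0:ℝ)] with t hTt ht0
    have hat0 : 0 < aT t := haT_pos t ht0
    have e1 : ∫ u in Set.Ioi (0:ℝ), Set.indicator (Set.Ioi (aT t)) (g t) u
        = ∫ u in Set.Ioi (aT t), g t u := by
      rw [integral_indicator measurableSet_Ioi, Measure.restrict_restrict measurableSet_Ioi,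
        Set.inter_eq_left.mpr (Set.Ioi_subset_Ioi hat0.le)]
    have hIb : IntegrableOn (g t) (Set.Ioc 0 (aT t)) := by
      refine Measure.integrableOn_of_bounded (M := t ^ (1/η)) measure_Ioc_lt_top.ne
        (hg_meas t ht0).aestronglyMeasurable ?_
      refine Filter.Eventually.of_forall (fun u => ?_)
      rw [Real.norm_eq_abs, abs_of_nonneg (hg_nonneg t ht0 u)]
      have hle1 : (μ {ω | X ω > U₁ t * u ∧ Y ω > U₂ t}).toReal ≤ 1 := by
        have := toReal_mono' {ω | X ω > U₁ t * u ∧ Y ω > U₂ t} Set.univ (Set.subset_univ _)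
        rwa [measure_univ, ENNReal.toReal_one] at this
      calc g t u ≤ t ^ (1/η) * 1 :=
            mul_le_mul_of_nonneg_left hle1 (rpow_nonneg ht0.le _)
        _ = t ^ (1/η) := mul_one _
    have hIa : IntegrableOn (g t) (Set.Ioi (aT t)) := by
      refine Integrable.mono' (hG_int.mono_set (Set.Ioi_subset_Ioi hat0.le))
        (hg_meas t ht0).aestronglyMeasurable ?_
      rw [ae_restrict_iff' measurableSet_Ioi]
      refine Filter.Eventually.of_forall (fun u hu => ?_)
      rw [Real.norm_eq_abs, abs_of_nonneg (hg_nonneg t ht0 u)]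
      exact key t hTt u (lt_trans hat0 hu) hu
    have e2 : (∫ u in Set.Ioc (0:ℝ) (aT t), g t u) + ∫ u in Set.Ioi (aT t), g t u
        = ∫ u in Set.Ioi (0:ℝ), g t u := by
      rw [← MeasureTheory.setIntegral_union (Set.Ioc_disjoint_Ioi le_rfl)
        measurableSet_Ioi hIb hIa, Set.Ioc_union_Ioi_eq_Ioi hat0.le]
    rw [e1, add_comm]
    exact e2
  -- identify with the statement's expression
  refine h3.congr' ?_
  filter_upwards [eventually_gt_atTop (1:ℝ)] with t ht
  have ht0 : (0:ℝ) < t := lt_trans one_pos ht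
  have hU : 0 < U₁ t := hU₁pos t ht0
  have layer : ∫ ω in {ω | Y ω > U₂ t}, X ω ∂μ
      = ∫ s in Set.Ioi (0:ℝ), (μ {ω | X ω > s ∧ Y ω > U₂ t}).toReal := by
    have hre : Integrable X (μ.restrict {ω | Y ω > U₂ t}) := hXint.restrict
    have hnn : 0 ≤ᵐ[μ.restrict {ω | Y ω > U₂ t}] X :=
      ae_restrict_of_ae (hXpos.mono fun ω h => h.le)
    rw [MeasureTheory.Integrable.integral_eq_integral_meas_lt hre hnn]
    have hptwise : ∀ s : ℝ, (μ.restrict {ω | Y ω > U₂ t} {a | s < X a}).toReal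
        = (μ {ω | X ω > s ∧ Y ω > U₂ t}).toReal := by
      intro s
      rw [Measure.restrict_apply (measurableSet_lt measurable_const hXm)]
      congr 1
    simp only [measureReal_def, hptwise]
  have subst : ∫ u in Set.Ioi (0:ℝ), (μ {ω | X ω > U₁ t * u ∧ Y ω > U₂ t}).toReal
      = (U₁ t)⁻¹ * ∫ s in Set.Ioi (0:ℝ), (μ {ω | X ω > s ∧ Y ω > U₂ t}).toReal := by
    have hi := integral_comp_mul_left_Ioi
      (fun s => (μ {ω | X ω > s ∧ Y ω > U₂ t}).toReal) 0 hU
    rw [mul_zero, smul_eq_mul] at hi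
    exact hi
  have e0 : ∫ u in Set.Ioi (0:ℝ), g t u
      = t ^ (1/η) * ((U₁ t)⁻¹ * ∫ ω in {ω | Y ω > U₂ t}, X ω ∂μ) := by
    simp only [hg_def]
    rw [MeasureTheory.integral_const_mul, subst, ← layer]
  rw [e0, hU₂ t ht]
  have hrpow : t ^ (-(1/η)+1) = (t ^ (1/η))⁻¹ * t := by
    rw [Real.rpow_add ht0, Real.rpow_one, Real.rpow_neg ht0.le]
  rw [hrpow]
  have hη0 : (0:ℝ) < t ^ (1/η) := rpow_pos_of_pos ht0 _
  field_simp
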